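/- If G = G₁ *_H G₂ is an injective amalgamated free product which is nontrivial (i.e. neither i₁ : H → G₁ nor i₂ : H → G₂ is an isomorphism), then G is infinite. -/
import Mathlib

open Monoid Monoid.PushoutI Monoid.CoprodI

/-- If `G = G₁ *_H G₂` is an injective amalgamated free product which is nontrivial
(neither `i₁ : H → G₁` nor `i₂ : H → G₂` is an isomorphism), then `G` is infinite. -/
theorem amalgamated_free_product_infinite
    {H : Type*} {G : Bool → Type*} [∀ b, Group (G b)] [Group H]
    (φ : ∀ b, H →* G b) (hφ : ∀ b, Function.Injective (φ b))
    (hnontriv : ∀ b, ¬ Function.Bijective (φ b)) :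
    Infinite (Monoid.PushoutI φ) := by
  classical
  have hsurj : ∀ b, ∃ g, g ∉ (φ b).range := by
    intro b
    by_contra h
    push_neg at h
    exact hnontriv b ⟨hφ b, fun g => h g⟩
  obtain ⟨g₁, hg₁⟩ := hsurj true
  obtain ⟨g₂, hg₂⟩ := hsurj false
  have hg₁1 : g₁ ≠ 1 := fun h => hg₁ (h ▸ ⟨1, map_one _⟩)
  have hg₂1 : g₂ ≠ 1 := fun h => hg₂ (h ▸ ⟨1, map_one _⟩)
  set x : Monoid.PushoutI φ :=
    Monoid.PushoutI.of (φ := φ) true g₁ * Monoid.PushoutI.of (φ := φ) false g₂ with hx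
  have key : ∀ n : ℕ, ∃ w : Monoid.CoprodI.Word G,
      Monoid.PushoutI.Reduced φ w ∧
      Monoid.PushoutI.ofCoprodI (φ := φ) w.prod = x ^ n ∧
      w.toList.length = 2 * n ∧ w.fstIdx ≠ some false := by
    intro n
    induction n with
    | zero =>
      refine ⟨.empty, ?_, by simp [Monoid.CoprodI.Word.prod, Monoid.CoprodI.Word.empty], rfl, ?_⟩
      · intro g hg; simp [Monoid.CoprodI.Word.empty] at hg
      · simp [Monoid.CoprodI.Word.fstIdx, Monoid.CoprodI.Word.empty]
    | succ n ih =>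
      obtain ⟨w, hred, hprod, hlen, hfst⟩ := ih
      refine ⟨⟨⟨true, g₁⟩ :: ⟨false, g₂⟩ :: w.toList, ?_, ?_⟩, ?_, ?_, ?_, ?_⟩
      · intro l hl
        simp only [List.mem_cons] at hl
        rcases hl with rfl | rfl | hl
        · exact hg₁1
        · exact hg₂1
        · exact w.ne_one l hl
      · refine List.isChain_cons_cons.2 ⟨by simp, List.isChain_cons.2 ⟨?_, w.chain_ne⟩⟩
        intro b hb hfalse
        apply hfst
        simp only [Monoid.CoprodI.Word.fstIdx, ← List.head?_map]
        rw [List.head?_map, hb]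
        simp [← hfalse]
      · intro g hg
        simp only [List.mem_cons] at hg
        rcases hg with rfl | rfl | hg
        · exact hg₁
        · exact hg₂
        · exact hred g hg
      · show Monoid.PushoutI.ofCoprodI (φ := φ)
          (List.prod ((⟨true, g₁⟩ :: ⟨false, g₂⟩ :: w.toList).map
            fun l => Monoid.CoprodI.of l.snd)) = x ^ (n + 1)
        rw [List.map_cons, List.map_cons, List.prod_cons, List.prod_cons, map_mul, map_mul]
        have : Monoid.PushoutI.ofCoprodI (φ := φ)
            (List.prod (w.toList.map fun l => Monoid.CoprodI.of l.snd)) = x ^ n := hprod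
        rw [this, Monoid.PushoutI.ofCoprodI_of, Monoid.PushoutI.ofCoprodI_of, pow_succ', hx,
          mul_assoc]
      · simp [hlen]; ring
      · simp [Monoid.CoprodI.Word.fstIdx]
  have hfin : ¬ IsOfFinOrder x := by
    intro hord
    obtain ⟨n, hn, hxn⟩ := isOfFinOrder_iff_pow_eq_one.1 hord
    obtain ⟨w, hred, hprod, hlen, -⟩ := key n
    have hmem : Monoid.PushoutI.ofCoprodI (φ := φ) w.prod ∈ (Monoid.PushoutI.base φ).range := by
      rw [hprod, hxn]
      exact ⟨1, map_one _⟩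
    have := hred.eq_empty_of_mem_range hφ hmem
    rw [this] at hlen
    simp [Monoid.CoprodI.Word.empty] at hlen
    omega
  exact Infinite.of_injective (fun n : ℕ => x ^ n)
    (injective_pow_iff_not_isOfFinOrder.2 hfin)
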